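/- Let k ≥ 0, let η be a probability measure on {0,1}^ℤ invariant under 𝕊^{2^k}, and suppose the measure D_k[η] on {0,1}^ℤ × {0,1}^ℕ is ergodic for 𝕊 × 𝕆. Let n > k and let ρ_n = exp(2^{1−n}πi). Then ρ_n is not an eigenvalue of the shift 𝕊 on the space ({0,1}^ℤ, θ₀), where θ₀ = 2^{−k} ∑_{j=0}^{2^k−1} 𝕊^j η is the projection of D_k[η] to {0,1}^ℤ; that is, there is no f ∈ L²(θ₀), f ≠ 0 a.e., with f∘𝕊 = ρ_n f θ₀-almost everywhere. -/

import Mathlib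

open MeasureTheory Classical

/-- The left shift on {0,1}^ℤ. -/
def shiftZ (w : ℤ → Bool) : ℤ → Bool := fun i => w (i + 1)

/-- The odometer (binary addition of one) on {0,1}^ℕ, totalized by fixing sequences
with no zero digit. -/
noncomputable def odo (α : ℕ → Bool) : ℕ → Bool :=
  if h : ∃ n, α n = false then
    fun i => if i < Nat.find h then false else if i = Nat.find h then true else α i
  else α

/-- The dyadic cylinder A_{r,k} = {α : ∑_{i<k} α_i 2^i = r}. -/
def cylA (r k : ℕ) : Set (ℕ → Bool) :=
  {α | (∑ i ∈ Finset.range k, if α i then 2 ^ i else 0) = r}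

/-- bit value -/
def bitVal (α : ℕ → Bool) (k : ℕ) : ℕ := ∑ i ∈ Finset.range k, if α i then 2 ^ i else 0

lemma bitVal_lt (α : ℕ → Bool) (k : ℕ) : bitVal α k < 2 ^ k := by
  induction k with
  | zero => simp [bitVal]
  | succ k ih =>
    rw [bitVal, Finset.sum_range_succ]
    have : (if α k then 2 ^ k else 0) ≤ 2 ^ k := by split <;> simp
    have h2 : (2:ℕ) ^ (k+1) = 2 ^ k + 2 ^ k := by ring
    rw [bitVal] at ih; omega

lemma bitVal_succ' (α : ℕ → Bool) (k : ℕ) :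
    bitVal α (k + 1) = 2 * bitVal (fun i => α (i + 1)) k + (if α 0 then 1 else 0) := by
  rw [bitVal, Finset.sum_range_succ', bitVal, Finset.mul_sum]
  congr 1
  refine Finset.sum_congr rfl fun i _ => ?_
  split <;> ring

lemma bitVal_inj {α β : ℕ → Bool} {k : ℕ} (h : bitVal α k = bitVal β k) :
    ∀ j, j < k → α j = β j := by
  induction k generalizing α β with
  | zero => intro j hj; omega
  | succ k ih =>
    intro j hj
    rw [bitVal_succ', bitVal_succ' β] at h
    have h0 : (if α 0 then 1 else 0) = (if β 0 then 1 else 0) := by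
      cases hα : α 0 <;> cases hβ : β 0 <;> simp [hα, hβ] at h ⊢ <;> omega
    have hx : bitVal (fun i => α (i + 1)) k = bitVal (fun i => β (i + 1)) k := by omega
    rcases j with _ | j
    · cases hα : α 0 <;> cases hβ : β 0 <;> simp [hα, hβ] at h0 ⊢
    · exact ih hx j (by omega)

lemma bitVal_testBit {i k : ℕ} (h : i < 2 ^ k) :
    bitVal (fun j => Nat.testBit i j) k = i := by
  induction k generalizing i with
  | zero => simp [bitVal]; omega
  | succ k ih =>
    rw [bitVal_succ']
    have h1 : bitVal (fun j => Nat.testBit i (j + 1)) k = i / 2 := by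
      have : (fun j => Nat.testBit i (j + 1)) = fun j => Nat.testBit (i / 2) j := by
        funext j; rw [Nat.testBit_succ]
      rw [this]; exact ih (by omega)
    have h0 : (if Nat.testBit i 0 then 1 else 0) = i % 2 := by
      rw [Nat.testBit_zero]
      rcases Nat.mod_two_eq_zero_or_one i with h2 | h2 <;> simp [h2] <;> omega
    rw [h1, h0]; omega

lemma sum_two_pow (j : ℕ) : (∑ i ∈ Finset.range j, 2 ^ i) + 1 = 2 ^ j := by
  induction j with
  | zero => simp
  | succ j ih => rw [Finset.sum_range_succ]; omega

lemma bitVal_odo_of_lt {α : ℕ → Bool} (h : ∃ i, α i = false) (n : ℕ)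
    (hj : Nat.find h < n) : bitVal (odo α) n = bitVal α n + 1 := by
  set j := Nat.find h with hjdef
  have hodo : odo α = fun i => if i < j then false else if i = j then true else α i := by
    rw [odo, dif_pos h]
  have hαj : α j = false := Nat.find_spec h
  have hαi : ∀ i, i < j → α i = true := by
    intro i hi
    have := Nat.find_min h hi
    cases hv : α i
    · exact absurd hv this
    · rfl
  have hsplit : ∀ β : ℕ → Bool, bitVal β n =
      (∑ i ∈ Finset.range (j+1), if β i then 2^i else 0)
      + ∑ i ∈ Finset.Ico (j+1) n, if β i then 2^i else 0 := by
    intro β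
    rw [bitVal, Finset.range_eq_Ico, Finset.range_eq_Ico]
    exact (Finset.sum_Ico_consecutive (fun i => if β i then (2:ℕ)^i else 0) (Nat.zero_le _) (by omega : j + 1 ≤ n)).symm
  rw [hsplit, hsplit]
  have htail : (∑ i ∈ Finset.Ico (j+1) n, if odo α i then 2^i else 0)
      = ∑ i ∈ Finset.Ico (j+1) n, if α i then 2^i else 0 := by
    refine Finset.sum_congr rfl fun i hi => ?_
    rw [Finset.mem_Ico] at hi
    simp only [hodo]
    rw [if_neg (show ¬ i < j by omega), if_neg (show ¬ i = j by omega)]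
  have hhead1 : (∑ i ∈ Finset.range (j+1), if odo α i then 2^i else 0) = 2^j := by
    rw [Finset.sum_range_succ, Finset.sum_eq_zero]
    · simp only [hodo]
      rw [if_neg (lt_irrefl j)]
      simp
    · intro i hi
      rw [Finset.mem_range] at hi
      simp only [hodo]
      rw [if_pos hi]
      simp
  have hhead2 : (∑ i ∈ Finset.range (j+1), if α i then 2^i else 0) + 1 = 2^j := by
    rw [Finset.sum_range_succ, hαj]
    have : (∑ i ∈ Finset.range j, if α i then 2^i else 0) = ∑ i ∈ Finset.range j, 2^i :=
      Finset.sum_congr rfl fun i hi => by rw [hαi i (Finset.mem_range.mp hi)]; simp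
    rw [this]
    simpa using sum_two_pow j
  omega

lemma bitVal_odo_of_ge {α : ℕ → Bool} (h : ∃ i, α i = false) (n : ℕ)
    (hj : n ≤ Nat.find h) : bitVal (odo α) n = 0 ∧ bitVal α n = 2^n - 1 := by
  have hodo : odo α = fun i => if i < Nat.find h then false
      else if i = Nat.find h then true else α i := by
    rw [odo, dif_pos h]
  constructor
  · rw [bitVal, Finset.sum_eq_zero]
    intro i hi
    rw [Finset.mem_range] at hi
    simp only [hodo]
    rw [if_pos (by omega : i < Nat.find h)]
    simp
  · rw [bitVal]
    have : (∑ i ∈ Finset.range n, if α i then 2^i else 0) = ∑ i ∈ Finset.range n, 2^i := by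
      refine Finset.sum_congr rfl fun i hi => ?_
      rw [Finset.mem_range] at hi
      have hmin := Nat.find_min h (show i < Nat.find h by omega)
      cases hv : α i
      · exact absurd hv hmin
      · simp
    have := sum_two_pow n
    omega

open Complex in
lemma exp_nat_inj {n v w : ℕ} (hv : v < 2 ^ n) (hw : w < 2 ^ n)
    (h : Complex.exp (2 * Real.pi * I * v / 2 ^ n) =
      Complex.exp (2 * Real.pi * I * w / 2 ^ n)) : v = w := by
  rw [Complex.exp_eq_exp_iff_exists_int] at h
  obtain ⟨M, hM⟩ := h
  have hne : (2 * (Real.pi:ℂ) * I) ≠ 0 := by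
    simp [Real.pi_ne_zero, Complex.I_ne_zero, Complex.ofReal_ne_zero]
  have h2n : ((2:ℂ) ^ n) ≠ 0 := pow_ne_zero _ two_ne_zero
  have key : (2 * (Real.pi:ℂ) * I) * ((v:ℂ) - w - M * 2 ^ n) = 0 := by
    field_simp at hM
    linear_combination (2 * (Real.pi:ℂ) * I) * hM
  have h3 : (v:ℂ) - w - M * 2 ^ n = 0 := by
    rcases mul_eq_zero.mp key with h' | h'
    · exact absurd h' hne
    · exact h'
  have h4 : (v:ℤ) = w + M * 2 ^ n := by
    have : ((v:ℂ)) = ((w + M * 2 ^ n : ℤ) : ℂ) := by push_cast; linear_combination h3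
    exact_mod_cast this
  have hP : (0:ℤ) < 2 ^ n := by positivity
  have hvP : (v:ℤ) < 2 ^ n := by exact_mod_cast hv
  have hwP : (w:ℤ) < 2 ^ n := by exact_mod_cast hw
  have hM0 : M = 0 := by
    rcases lt_trichotomy M 0 with hML | hME | hMG
    · have : M * 2 ^ n ≤ -1 * 2 ^ n := by
        apply mul_le_mul_of_nonneg_right (by omega) (le_of_lt hP)
      have hv0 : (0:ℤ) ≤ v := Int.natCast_nonneg v
      have hw0 : (0:ℤ) ≤ w := Int.natCast_nonneg w
      omega
    · exact hME
    · have : 1 * 2 ^ n ≤ M * 2 ^ n := by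
        apply mul_le_mul_of_nonneg_right (by omega) (le_of_lt hP)
      have hv0 : (0:ℤ) ≤ v := Int.natCast_nonneg v
      have hw0 : (0:ℤ) ≤ w := Int.natCast_nonneg w
      omega
  rw [hM0] at h4
  omega

/-- eigenfunction of the odometer -/
noncomputable def cfun (n : ℕ) (α : ℕ → Bool) : ℂ :=
  Complex.exp (2 * Real.pi * Complex.I * (bitVal α n) / 2 ^ n)

lemma cfun_odo (n : ℕ) (α : ℕ → Bool) (h : ∃ i, α i = false) :
    cfun n (odo α) = Complex.exp (2 * Real.pi * Complex.I / 2 ^ n) * cfun n α := by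
  have h2n : ((2:ℂ) ^ n) ≠ 0 := pow_ne_zero _ two_ne_zero
  rcases lt_or_ge (Nat.find h) n with hlt | hge
  · rw [cfun, cfun, bitVal_odo_of_lt h n hlt, ← Complex.exp_add]
    congr 1
    push_cast
    field_simp
    ring
  · obtain ⟨h0, h1⟩ := bitVal_odo_of_ge h n hge
    rw [cfun, cfun, h0, h1, ← Complex.exp_add]
    rw [Nat.cast_sub (Nat.one_le_two_pow)]
    push_cast
    have hrhs : 2 * (Real.pi:ℂ) * Complex.I / 2 ^ n
        + 2 * (Real.pi:ℂ) * Complex.I * ((2:ℂ) ^ n - 1) / 2 ^ n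
        = 2 * (Real.pi:ℂ) * Complex.I := by
      field_simp
      ring
    rw [hrhs, Complex.exp_two_pi_mul_I]
    norm_num

lemma cfun_measurable (n : ℕ) : Measurable (cfun n) := by
  have hb : Measurable (fun α : ℕ → Bool => bitVal α n) := by
    unfold bitVal
    refine Finset.measurable_sum _ fun i _ => ?_
    exact (Measurable.of_discrete (f := fun b : Bool => if b then 2 ^ i else (0:ℕ))).comp
      (measurable_pi_apply i)
  exact (Measurable.of_discrete
    (f := fun v : ℕ => Complex.exp (2 * Real.pi * Complex.I * v / 2 ^ n))).comp hb

lemma cfun_abs (n : ℕ) (α : ℕ → Bool) : cfun n α ≠ 0 := Complex.exp_ne_zero _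

lemma cfun_inj {n : ℕ} {α β : ℕ → Bool} (h : cfun n α = cfun n β) :
    ∀ j, j < n → α j = β j :=
  bitVal_inj (exp_nat_inj (bitVal_lt α n) (bitVal_lt β n) h)


lemma cylA_eq_cylinder {i k : ℕ} (h : i < 2 ^ k) :
    cylA i k = {α | ∀ j ∈ Finset.range k, α j = Nat.testBit i j} := by
  ext α
  constructor
  · intro hα j hj
    have hα' : bitVal α k = bitVal (fun j => Nat.testBit i j) k := by
      rw [bitVal_testBit h]; exact hα
    exact bitVal_inj hα' j (Finset.mem_range.mp hj)
  · intro hα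
    show bitVal α k = i
    have : bitVal α k = bitVal (fun j => Nat.testBit i j) k := by
      rw [bitVal, bitVal]
      exact Finset.sum_congr rfl fun j hj => by rw [hα j hj]
    rw [this, bitVal_testBit h]

/-- Let η be 𝕊^(2^k)-invariant on {0,1}^ℤ and suppose
D_k[η] = ∑_{i<2^k} (𝕊^i η) × (χ_{A_{i,k}} m) is ergodic for 𝕊 × 𝕆. Then for n > k,
ρ_n = exp(2πi/2^n) is not an eigenvalue of 𝕊 on ({0,1}^ℤ, θ₀), where
θ₀ = 2^{−k} ∑_{j<2^k} 𝕊^j η. -/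
theorem rho_n_not_eigenvalue (k : ℕ)
    (η : Measure (ℤ → Bool)) [IsProbabilityMeasure η]
    (hη : Measure.map (shiftZ^[2 ^ k]) η = η)
    (m : Measure (ℕ → Bool)) [IsProbabilityMeasure m]
    (hm : ∀ (s : Finset ℕ) (f : ℕ → Bool),
      m {α | ∀ i ∈ s, α i = f i} = (1 / 2 : ENNReal) ^ s.card)
    (herg : Ergodic (fun p : (ℤ → Bool) × (ℕ → Bool) => (shiftZ p.1, odo p.2))
      (∑ i ∈ Finset.range (2 ^ k),
        (Measure.map (shiftZ^[i]) η).prod (m.restrict (cylA i k))))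
    (n : ℕ) (hn : k < n) :
    ¬ ∃ f : (ℤ → Bool) → ℂ,
      MemLp f 2 ((2 ^ k : ENNReal)⁻¹ • ∑ j ∈ Finset.range (2 ^ k),
        Measure.map (shiftZ^[j]) η) ∧
      ¬ (f =ᵐ[(2 ^ k : ENNReal)⁻¹ • ∑ j ∈ Finset.range (2 ^ k),
        Measure.map (shiftZ^[j]) η] 0) ∧
      (∀ᵐ w ∂((2 ^ k : ENNReal)⁻¹ • ∑ j ∈ Finset.range (2 ^ k),
          Measure.map (shiftZ^[j]) η),
        f (shiftZ w) = Complex.exp (2 * Real.pi * Complex.I / (2 ^ n)) * f w) := by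
  rintro ⟨f, hf, hf0, heig⟩
  set μi : ℕ → Measure (ℤ → Bool) := fun i => Measure.map (shiftZ^[i]) η with hμi
  set νi : ℕ → Measure (ℕ → Bool) := fun i => m.restrict (cylA i k) with hνi
  set θ : Measure (ℤ → Bool) :=
    ((2 ^ k : ENNReal)⁻¹ • ∑ j ∈ Finset.range (2 ^ k), μi j) with hθ
  set D : Measure ((ℤ → Bool) × (ℕ → Bool)) :=
    (∑ i ∈ Finset.range (2 ^ k), (μi i).prod (νi i)) with hD
  set ρ : ℂ := Complex.exp (2 * Real.pi * Complex.I / (2 ^ n)) with hρ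
  set c : (ℕ → Bool) → ℂ := cfun n with hc
  -- basic measure comparisons
  have h2k0 : ((2:ENNReal) ^ k) ≠ 0 := pow_ne_zero _ (by norm_num)
  have h2kt : ((2:ENNReal) ^ k) ≠ ⊤ := by
    exact ENNReal.pow_ne_top (by norm_num)
  have hsum_eq : (2 ^ k : ENNReal) • θ = ∑ j ∈ Finset.range (2 ^ k), μi j := by
    rw [hθ, smul_smul, ENNReal.mul_inv_cancel h2k0 h2kt, one_smul]
  have hμθ : ∀ i ∈ Finset.range (2 ^ k), μi i ≪ θ := by
    intro i hi
    refine Measure.absolutelyContinuous_of_le_smul (c := 2 ^ k) ?_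
    rw [hsum_eq]
    refine Measure.le_iff'.mpr fun s => ?_
    rw [Measure.finset_sum_apply]
    exact Finset.single_le_sum (f := fun j => μi j s) (fun j _ => zero_le) hi
  have hprodD : ∀ i ∈ Finset.range (2 ^ k), (μi i).prod (νi i) ≪ D := by
    intro i hi
    refine Measure.absolutelyContinuous_of_le (Measure.le_iff'.mpr fun s => ?_)
    rw [hD, Measure.finset_sum_apply]
    exact Finset.single_le_sum (f := fun j => ((μi j).prod (νi j)) s) (fun j _ => zero_le) hi
  -- measurable version of f
  obtain ⟨f', hf'm, hff'⟩ : ∃ f', StronglyMeasurable f' ∧ f =ᵐ[θ] f' :=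
    ⟨hf.1.mk f, hf.1.stronglyMeasurable_mk, hf.1.ae_eq_mk⟩
  have hf'meas : Measurable f' := hf'm.measurable
  -- the product eigenfunction
  set g : (ℤ → Bool) × (ℕ → Bool) → ℂ :=
    fun p => f p.1 * (starRingEnd ℂ) (c p.2) with hg
  set g' : (ℤ → Bool) × (ℕ → Bool) → ℂ :=
    fun p => f' p.1 * (starRingEnd ℂ) (c p.2) with hg'
  have hconjmeas : Measurable fun z : ℂ => (starRingEnd ℂ) z :=
    Complex.continuous_conj.measurable
  have hg'meas : Measurable g' :=
    (hf'meas.comp measurable_fst).mul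
      (hconjmeas.comp ((cfun_measurable n).comp measurable_snd))
  -- null sets
  have hNall : m {α : ℕ → Bool | ∀ i, α i = true} = 0 := by
    have hle : ∀ N : ℕ, m {α : ℕ → Bool | ∀ i, α i = true} ≤ (1 / 2 : ENNReal) ^ N := by
      intro N
      calc m {α : ℕ → Bool | ∀ i, α i = true}
          ≤ m {α : ℕ → Bool | ∀ i ∈ Finset.range N, α i = (fun _ => true) i} :=
            measure_mono (fun α hα i _ => hα i)
        _ = (1 / 2 : ENNReal) ^ (Finset.range N).card := hm _ _
        _ = (1 / 2 : ENNReal) ^ N := by rw [Finset.card_range]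
    have h0 := ENNReal.tendsto_pow_atTop_nhds_zero_of_lt_one
      (by norm_num : (1 / 2 : ENNReal) < 1)
    exact le_antisymm (ge_of_tendsto' h0 hle) (zero_le)
  have hθbad : θ {w | ¬ f (shiftZ w) = ρ * f w} = 0 := by
    rw [ae_iff] at heig; exact heig
  -- D-null bad set
  have hD_rect : ∀ (S : Set (ℤ → Bool)), θ S = 0 →
      D (S ×ˢ (Set.univ : Set (ℕ → Bool))) = 0 := by
    intro S hS
    rw [hD, Measure.finset_sum_apply]
    refine Finset.sum_eq_zero fun i hi => ?_
    rw [Measure.prod_prod, hμθ i hi hS, zero_mul]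
  have hD_all : D ((Set.univ : Set (ℤ → Bool)) ×ˢ {α : ℕ → Bool | ∀ i, α i = true}) = 0 := by
    rw [hD, Measure.finset_sum_apply]
    refine Finset.sum_eq_zero fun i hi => ?_
    rw [Measure.prod_prod]
    have hν : νi i {α : ℕ → Bool | ∀ i, α i = true} = 0 :=
      le_antisymm (le_trans (Measure.le_iff'.mp Measure.restrict_le_self _) hNall.le) (zero_le)
    rw [hν, mul_zero]
  have hDbad : D ({w | ¬ f (shiftZ w) = ρ * f w} ×ˢ (Set.univ : Set (ℕ → Bool)) ∪
      (Set.univ : Set (ℤ → Bool)) ×ˢ {α : ℕ → Bool | ∀ i, α i = true}) = 0 := by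
    refine le_antisymm (le_trans (measure_union_le _ _) ?_) (zero_le)
    rw [hD_rect _ hθbad, hD_all, add_zero]
  have hDae : ∀ᵐ p ∂D, p ∉ ({w | ¬ f (shiftZ w) = ρ * f w} ×ˢ (Set.univ : Set (ℕ → Bool)) ∪
      (Set.univ : Set (ℤ → Bool)) ×ˢ {α : ℕ → Bool | ∀ i, α i = true}) := by
    rw [ae_iff]
    simp only [not_not, Set.setOf_mem_eq]
    exact hDbad
  -- invariance of g
  have hρρ : ρ * (starRingEnd ℂ) ρ = 1 := by
    have hconj : (starRingEnd ℂ) (2 * (Real.pi:ℂ) * Complex.I / (2 ^ n))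
        = -(2 * (Real.pi:ℂ) * Complex.I / (2 ^ n)) := by
      rw [map_div₀, map_mul, map_mul, Complex.conj_I, Complex.conj_ofReal, map_pow, map_ofNat]
      ring
    rw [hρ, ← Complex.exp_conj, hconj, ← Complex.exp_add]
    simp
  have hInv : g ∘ (fun p : (ℤ → Bool) × (ℕ → Bool) => (shiftZ p.1, odo p.2)) =ᵐ[D] g := by
    filter_upwards [hDae] with p hp
    simp only [Set.mem_union, Set.mem_prod, Set.mem_univ, and_true, true_and,
      Set.mem_setOf_eq, not_or] at hp
    obtain ⟨hp1, hp2⟩ := hp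
    have h1 : f (shiftZ p.1) = ρ * f p.1 := not_not.mp hp1
    have h2 : ∃ i, p.2 i = false := by
      by_contra hcon
      push_neg at hcon
      refine hp2 fun i => ?_
      cases hv : p.2 i
      · exact absurd hv (hcon i)
      · rfl
    show f (shiftZ p.1) * (starRingEnd ℂ) (c (odo p.2)) = f p.1 * (starRingEnd ℂ) (c p.2)
    rw [h1, hc, cfun_odo n p.2 h2, map_mul]
    have : (ρ * f p.1) * ((starRingEnd ℂ) ρ * (starRingEnd ℂ) (cfun n p.2))
        = (ρ * (starRingEnd ℂ) ρ) * (f p.1 * (starRingEnd ℂ) (cfun n p.2)) := by ring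
    rw [← hρ, this, hρρ, one_mul]
  -- g is a.e. strongly measurable
  have hgg' : g =ᵐ[D] g' := by
    have hθf : θ {w | ¬ f w = f' w} = 0 := by
      have h := hff'
      rw [Filter.EventuallyEq, ae_iff] at h
      exact h
    have hDf : D ({w | ¬ f w = f' w} ×ˢ (Set.univ : Set (ℕ → Bool))) = 0 := hD_rect _ hθf
    have : ∀ᵐ p ∂D, p ∉ ({w | ¬ f w = f' w} ×ˢ (Set.univ : Set (ℕ → Bool))) := by
      rw [ae_iff]
      simp only [not_not, Set.setOf_mem_eq]
      exact hDf
    filter_upwards [this] with p hp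
    simp only [Set.mem_prod, Set.mem_univ, and_true, Set.mem_setOf_eq, not_not] at hp
    show f p.1 * (starRingEnd ℂ) (c p.2) = f' p.1 * (starRingEnd ℂ) (c p.2)
    rw [hp]
  have hgm : AEStronglyMeasurable g D :=
    hg'meas.aestronglyMeasurable.congr hgg'.symm
  -- ergodicity: g is a.e. constant
  obtain ⟨C, hC⟩ := herg.ae_eq_const_of_ae_eq_comp_ae hgm hInv
  have hC' : g' =ᵐ[D] Function.const _ C := hgg'.symm.trans hC
  -- Fubini per component
  have hi0 : ∀ i ∈ Finset.range (2 ^ k), ∀ᵐ w ∂(μi i), f' w = 0 := by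
    intro i hi
    have hik : i < 2 ^ k := Finset.mem_range.mp hi
    have hCi : g' =ᵐ[(μi i).prod (νi i)] Function.const _ C :=
      hC'.filter_mono (hprodD i hi).ae_le
    have hfub := Measure.ae_ae_of_ae_prod hCi
    filter_upwards [hfub] with w hw
    by_contra hfw
    set G : Set (ℕ → Bool) := {α | f' w * (starRingEnd ℂ) (c α) = C} with hGdef
    have hGmeas : MeasurableSet G := by
      have hmeas : Measurable fun α => f' w * (starRingEnd ℂ) (c α) :=
        measurable_const.mul (hconjmeas.comp (hc ▸ cfun_measurable n))
      exact hmeas (measurableSet_singleton C)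
    have hgc : (νi i) Gᶜ = 0 := by
      rw [ae_iff] at hw
      exact hw
    have hrz : m (Gᶜ ∩ cylA i k) = 0 := by
      rw [hνi] at hgc
      rwa [Measure.restrict_apply hGmeas.compl] at hgc
    have hcyl : m (cylA i k) = (1 / 2 : ENNReal) ^ k := by
      rw [cylA_eq_cylinder hik, hm, Finset.card_range]
    have hsplit : m (cylA i k) ≤ m (G ∩ cylA i k) := by
      have : m (cylA i k) ≤ m (G ∩ cylA i k) + m (Gᶜ ∩ cylA i k) := by
        calc m (cylA i k) = m ((G ∩ cylA i k) ∪ (Gᶜ ∩ cylA i k)) := by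
              rw [← Set.union_inter_distrib_right, Set.union_compl_self, Set.univ_inter]
          _ ≤ _ := measure_union_le _ _
      rwa [hrz, add_zero] at this
    have hub : m (cylA i k) ≤ (1 / 2 : ENNReal) ^ n := by
      rcases Set.eq_empty_or_nonempty (G ∩ cylA i k) with hemp | ⟨α₀, hα₀⟩
      · rw [hemp, measure_empty] at hsplit
        exact hsplit.trans (zero_le)
      · have hsub : G ∩ cylA i k ⊆ {α | ∀ j ∈ Finset.range n, α j = α₀ j} := by
          rintro α ⟨hαG, -⟩ j hj
          have h1 : f' w * (starRingEnd ℂ) (c α) = f' w * (starRingEnd ℂ) (c α₀) :=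
            hαG.trans hα₀.1.symm
          have h2 := mul_left_cancel₀ hfw h1
          have hcc : c α = c α₀ := (starRingEnd ℂ).injective h2
          rw [hc] at hcc
          exact cfun_inj hcc j (Finset.mem_range.mp hj)
        calc m (cylA i k) ≤ m (G ∩ cylA i k) := hsplit
          _ ≤ m {α | ∀ j ∈ Finset.range n, α j = α₀ j} := measure_mono hsub
          _ = (1 / 2 : ENNReal) ^ n := by rw [hm, Finset.card_range]
    rw [hcyl] at hub
    have htr := ENNReal.toReal_mono (by simp) hub
    rw [ENNReal.toReal_pow, ENNReal.toReal_pow] at htr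
    norm_num at htr
    have := pow_lt_pow_right_of_lt_one₀ (by norm_num : (0:ℝ) < 1/2)
      (by norm_num : (1:ℝ)/2 < 1) hn
    norm_num at this
    linarith
  -- conclude
  have hNf' : θ {w | ¬ f' w = 0} = 0 := by
    rw [hθ, Measure.smul_apply, Measure.finset_sum_apply]
    rw [Finset.sum_eq_zero fun i hi => ae_iff.mp (hi0 i hi)]
    simp
  have hf'0 : f' =ᵐ[θ] (0 : (ℤ → Bool) → ℂ) := by
    have : ∀ᵐ w ∂θ, f' w = 0 := by rw [ae_iff]; exact hNf'
    filter_upwards [this] with w hw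
    simpa using hw
  exact hf0 (hff'.trans hf'0)
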